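/- The free metabelian associative algebra A_2(M) on generators u, v (the free unital associative C-algebra on two generators modulo the T-ideal generated by [x1,x2][x3,x4]) has a C-vector space basis consisting of the elements u^a v^b and u^a v^b [v,u] u^c v^d, for a, b, c, d ≥ 0, where [v,u] = vu − uv. -/

import Mathlib

/-- The relation whose `RingQuot` is the free metabelian associative algebra:
we kill all products of two commutators, i.e. the T-ideal of
`[x₁,x₂][x₃,x₄]`. -/
def MetabelianRel (X : Type*) (x y : FreeAlgebra ℂ X) : Prop :=
  (∃ f1 f2 f3 f4 : FreeAlgebra ℂ X,
    x = (f1 * f2 - f2 * f1) * (f3 * f4 - f4 * f3)) ∧ y = 0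

/-- The free metabelian associative algebra on two generators over `ℂ`. -/
abbrev FreeMetabelian2 : Type := RingQuot (MetabelianRel (Fin 2))

noncomputable def Ugen : FreeMetabelian2 :=
  RingQuot.mkAlgHom ℂ (MetabelianRel (Fin 2)) (FreeAlgebra.ι ℂ 0)

noncomputable def Vgen : FreeMetabelian2 :=
  RingQuot.mkAlgHom ℂ (MetabelianRel (Fin 2)) (FreeAlgebra.ι ℂ 1)

noncomputable def Tcomm : FreeMetabelian2 := Vgen * Ugen - Ugen * Vgen

lemma comm_mul_comm (a b c d : FreeMetabelian2) :
    (a * b - b * a) * (c * d - d * c) = 0 := by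
  obtain ⟨fa, rfl⟩ := RingQuot.mkAlgHom_surjective ℂ (MetabelianRel (Fin 2)) a
  obtain ⟨fb, rfl⟩ := RingQuot.mkAlgHom_surjective ℂ (MetabelianRel (Fin 2)) b
  obtain ⟨fc, rfl⟩ := RingQuot.mkAlgHom_surjective ℂ (MetabelianRel (Fin 2)) c
  obtain ⟨fd, rfl⟩ := RingQuot.mkAlgHom_surjective ℂ (MetabelianRel (Fin 2)) d
  have h : (RingQuot.mkAlgHom ℂ (MetabelianRel (Fin 2)))
      ((fa * fb - fb * fa) * (fc * fd - fd * fc)) =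
      (RingQuot.mkAlgHom ℂ (MetabelianRel (Fin 2))) 0 :=
    RingQuot.mkAlgHom_rel ℂ ⟨⟨fa, fb, fc, fd, rfl⟩, rfl⟩
  simpa [map_mul, map_sub] using h

lemma comm_mid (a b c d x : FreeMetabelian2) :
    (a * b - b * a) * x * (c * d - d * c) = 0 := by
  have key : (a * b - b * a) * x * (c * d - d * c)
      = (a * b - b * a) * ((x * c) * d - d * (x * c))
        - ((a * b - b * a) * ((x * d) - d * x)) * c := by
    simp only [mul_sub, sub_mul, mul_assoc]; abel
  rw [key, comm_mul_comm, comm_mul_comm, zero_mul, sub_zero]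

lemma t_sandwich (p x q : FreeMetabelian2) : p * Tcomm * x * Tcomm * q = 0 := by
  have h := comm_mid Vgen Ugen Vgen Ugen x
  have key : p * Tcomm * x * Tcomm * q
      = p * ((Vgen * Ugen - Ugen * Vgen) * x * (Vgen * Ugen - Ugen * Vgen)) * q := by
    unfold Tcomm; noncomm_ring
  rw [key, h, mul_zero, zero_mul]

lemma vpow_mul_u (b : ℕ) : Vgen ^ b * Ugen
    = Ugen * Vgen ^ b + ∑ j ∈ Finset.range b, Vgen ^ j * Tcomm * Vgen ^ (b - 1 - j) := by
  induction b with
  | zero => simp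
  | succ b ih =>
    have hvu : Vgen * Ugen = Ugen * Vgen + Tcomm := by unfold Tcomm; noncomm_ring
    have h1 : Vgen * (Ugen * Vgen ^ b) = Ugen * Vgen ^ (b + 1) + Tcomm * Vgen ^ b := by
      rw [← mul_assoc, hvu, add_mul, pow_succ']
      noncomm_ring
    have h2 : ∀ j ∈ Finset.range b, Vgen * (Vgen ^ j * Tcomm * Vgen ^ (b - 1 - j))
        = Vgen ^ (j + 1) * Tcomm * Vgen ^ (b + 1 - 1 - (j + 1)) := by
      intro j hj
      have he : b + 1 - 1 - (j + 1) = b - 1 - j := by omega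
      rw [he, ← mul_assoc, ← mul_assoc, ← pow_succ']
    rw [pow_succ', mul_assoc, ih, mul_add, Finset.mul_sum, Finset.sum_range_succ', h1,
      Finset.sum_congr rfl h2]
    simp only [pow_zero, one_mul, Nat.add_sub_cancel, Nat.sub_zero, ← pow_succ']
    abel

noncomputable section MatrixModel

open MvPolynomial

abbrev Rp : Type := MvPolynomial (Fin 4) ℂ

def Mu : Matrix (Fin 2) (Fin 2) Rp := !![X 0, 0; 0, X 2]
def Mv : Matrix (Fin 2) (Fin 2) Rp := !![X 1, 1; 0, X 3]

def phi : FreeAlgebra ℂ (Fin 2) →ₐ[ℂ] Matrix (Fin 2) (Fin 2) Rp :=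
  FreeAlgebra.lift ℂ ![Mu, Mv]

lemma phi_tri (f : FreeAlgebra ℂ (Fin 2)) : phi f 1 0 = 0 := by
  induction f using FreeAlgebra.induction with
  | grade0 r => simp [Matrix.algebraMap_matrix_apply]
  | grade1 i =>
      fin_cases i <;> simp [phi, FreeAlgebra.lift_ι_apply, Mu, Mv]
  | mul a b ha hb =>
      rw [map_mul]
      simp [Matrix.mul_apply, Fin.sum_univ_two, ha, hb]
  | add a b ha hb => rw [map_add]; simp [ha, hb]

lemma tri_rel : ∀ ⦃x y : FreeAlgebra ℂ (Fin 2)⦄, MetabelianRel (Fin 2) x y → phi x = phi y := by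
  rintro x y ⟨⟨f1, f2, f3, f4, rfl⟩, rfl⟩
  rw [map_zero, map_mul, map_sub, map_sub, map_mul, map_mul, map_mul, map_mul]
  rw [← Matrix.ext_iff]
  intro i j
  fin_cases i <;> fin_cases j <;>
    simp [Matrix.mul_apply, Matrix.sub_apply, Fin.sum_univ_two, phi_tri, -mul_eq_zero] <;>
    ring

def Phi : FreeMetabelian2 →ₐ[ℂ] Matrix (Fin 2) (Fin 2) Rp :=
  RingQuot.liftAlgHom ℂ ⟨phi, tri_rel⟩

lemma Phi_U : Phi Ugen = Mu := by
  rw [Phi, Ugen, RingQuot.liftAlgHom_mkAlgHom_apply, phi, FreeAlgebra.lift_ι_apply]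
  rfl

lemma Phi_V : Phi Vgen = Mv := by
  rw [Phi, Vgen, RingQuot.liftAlgHom_mkAlgHom_apply, phi, FreeAlgebra.lift_ι_apply]
  rfl

lemma Mu_pow (a : ℕ) : Mu ^ a = !![X 0 ^ a, 0; 0, X 2 ^ a] := by
  induction a with
  | zero =>
      rw [← Matrix.ext_iff]; intro i j
      fin_cases i <;> fin_cases j <;> simp [Matrix.one_apply]
  | succ a ih =>
      rw [pow_succ, ih, ← Matrix.ext_iff]; intro i j
      fin_cases i <;> fin_cases j <;>
        simp [Mu, Matrix.mul_apply, Fin.sum_univ_two, pow_succ]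

lemma Mv_pow (b : ℕ) :
    (Mv ^ b) 0 0 = X 1 ^ b ∧ (Mv ^ b) 1 0 = 0 ∧ (Mv ^ b) 1 1 = X 3 ^ b := by
  have e00 : Mv 0 0 = X 1 := rfl
  have e10 : Mv 1 0 = 0 := rfl
  have e11 : Mv 1 1 = X 3 := rfl
  induction b with
  | zero => simp [Matrix.one_apply]
  | succ b ih =>
      obtain ⟨h1, h2, h3⟩ := ih
      rw [pow_succ]
      refine ⟨?_, ?_, ?_⟩ <;>
        simp [Matrix.mul_apply, Fin.sum_univ_two, h1, h2, h3, e00, e10, e11, pow_succ]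

lemma L_entries (a b : ℕ) :
    (Mu ^ a * Mv ^ b) 0 0 = X 0 ^ a * X 1 ^ b ∧ (Mu ^ a * Mv ^ b) 1 0 = 0 ∧
      (Mu ^ a * Mv ^ b) 1 1 = X 2 ^ a * X 3 ^ b := by
  obtain ⟨h1, h2, h3⟩ := Mv_pow b
  rw [Mu_pow]
  refine ⟨?_, ?_, ?_⟩ <;> simp [Matrix.mul_apply, Fin.sum_univ_two, h1, h2, h3]

lemma Tm_eq : Mv * Mu - Mu * Mv = !![0, X 2 - X 0; 0, 0] := by
  rw [← Matrix.ext_iff]; intro i j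
  fin_cases i <;> fin_cases j <;>
    simp [Mu, Mv, Matrix.mul_apply, Fin.sum_univ_two] <;> ring

lemma inr_entries (a b c d : ℕ) :
    ((Mu ^ a * Mv ^ b * (Mv * Mu - Mu * Mv) * Mu ^ c * Mv ^ d)) 0 0 = 0 ∧
      ((Mu ^ a * Mv ^ b * (Mv * Mu - Mu * Mv) * Mu ^ c * Mv ^ d)) 0 1
        = (X 2 - X 0) * (X 0 ^ a * X 1 ^ b * X 2 ^ c * X 3 ^ d) := by
  obtain ⟨hL1, hL2, hL3⟩ := L_entries a b
  obtain ⟨hR1, hR2, hR3⟩ := L_entries c d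
  set Tm : Matrix (Fin 2) (Fin 2) Rp := Mv * Mu - Mu * Mv with hTm
  have t00 : Tm 0 0 = 0 := by rw [hTm, Tm_eq]; rfl
  have t01 : Tm 0 1 = X 2 - X 0 := by rw [hTm, Tm_eq]; rfl
  have t10 : Tm 1 0 = 0 := by rw [hTm, Tm_eq]; rfl
  have t11 : Tm 1 1 = 0 := by rw [hTm, Tm_eq]; rfl
  have hm00 : (Mu ^ a * Mv ^ b * Tm) 0 0 = 0 := by
    rw [Matrix.mul_apply, Fin.sum_univ_two, t00, t10, mul_zero, mul_zero, add_zero]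
  have hm01 : (Mu ^ a * Mv ^ b * Tm) 0 1 = X 0 ^ a * X 1 ^ b * (X 2 - X 0) := by
    rw [Matrix.mul_apply, Fin.sum_univ_two, t01, t11, hL1, mul_zero, add_zero]
  have hassoc : Mu ^ a * Mv ^ b * Tm * Mu ^ c * Mv ^ d
      = (Mu ^ a * Mv ^ b * Tm) * (Mu ^ c * Mv ^ d) := by
    rw [mul_assoc]
  rw [hassoc]
  constructor
  · rw [Matrix.mul_apply, Fin.sum_univ_two, hm00, hR2, zero_mul, mul_zero, add_zero]
  · rw [Matrix.mul_apply, Fin.sum_univ_two, hm00, hm01, hR3, zero_mul, zero_add]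
    ring

end MatrixModel

noncomputable section Assembly

open MvPolynomial Finset

/-- The claimed basis family. -/
noncomputable def famA : (ℕ × ℕ) ⊕ (ℕ × ℕ × ℕ × ℕ) → FreeMetabelian2 :=
  Sum.elim (fun p => Ugen ^ p.1 * Vgen ^ p.2)
    (fun p => Ugen ^ p.1 * Vgen ^ p.2.1 * (Vgen * Ugen - Ugen * Vgen) * Ugen ^ p.2.2.1 *
      Vgen ^ p.2.2.2)

/-- entry extraction as a linear map. -/
def entryLM (i j : Fin 2) : Matrix (Fin 2) (Fin 2) Rp →ₗ[ℂ] Rp where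
  toFun M := M i j
  map_add' := by intros; simp
  map_smul' := by intros; simp

def fs4 : ℕ × ℕ × ℕ × ℕ → (Fin 4 →₀ ℕ) := fun p =>
  Finsupp.single 0 p.1 + Finsupp.single 1 p.2.1 + Finsupp.single 2 p.2.2.1 +
    Finsupp.single 3 p.2.2.2

def fs2 : ℕ × ℕ → (Fin 4 →₀ ℕ) := fun p => Finsupp.single 0 p.1 + Finsupp.single 1 p.2

lemma fs4_inj : Function.Injective fs4 := by
  rintro ⟨a, b, c, d⟩ ⟨a', b', c', d'⟩ h
  have h0 := DFunLike.congr_fun h (0 : Fin 4)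
  have h1 := DFunLike.congr_fun h (1 : Fin 4)
  have h2 := DFunLike.congr_fun h (2 : Fin 4)
  have h3 := DFunLike.congr_fun h (3 : Fin 4)
  simp [fs4, Finsupp.single_apply] at h0 h1 h2 h3
  simp_all

lemma fs2_inj : Function.Injective fs2 := by
  rintro ⟨a, b⟩ ⟨a', b'⟩ h
  have h0 := DFunLike.congr_fun h (0 : Fin 4)
  have h1 := DFunLike.congr_fun h (1 : Fin 4)
  simp [fs2, Finsupp.single_apply] at h0 h1
  simp_all

lemma mono4 (a b c d : ℕ) :
    (X 0 : Rp) ^ a * X 1 ^ b * X 2 ^ c * X 3 ^ d = monomial (fs4 (a, b, c, d)) 1 := by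
  simp [fs4, X_pow_eq_monomial, monomial_mul]

lemma mono2 (a b : ℕ) : (X 0 : Rp) ^ a * X 1 ^ b = monomial (fs2 (a, b)) 1 := by
  simp [fs2, X_pow_eq_monomial, monomial_mul]

lemma hXX : (X 2 - X 0 : Rp) ≠ 0 := by
  refine sub_ne_zero.2 fun h => ?_
  have := MvPolynomial.X_injective h
  exact (by decide : (2 : Fin 4) ≠ 0) this

/-- independence of the monomial families -/
lemma ind4 : LinearIndependent ℂ (fun p : ℕ × ℕ × ℕ × ℕ => (monomial (fs4 p) 1 : Rp)) := by
  have hb := (MvPolynomial.basisMonomials (Fin 4) ℂ).linearIndependent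
  have := hb.comp fs4 fs4_inj
  simpa [MvPolynomial.coe_basisMonomials, Function.comp_def] using this

lemma ind2 : LinearIndependent ℂ (fun p : ℕ × ℕ => (monomial (fs2 p) 1 : Rp)) := by
  have hb := (MvPolynomial.basisMonomials (Fin 4) ℂ).linearIndependent
  have := hb.comp fs2 fs2_inj
  simpa [MvPolynomial.coe_basisMonomials, Function.comp_def] using this

def VL : ℕ × ℕ → Matrix (Fin 2) (Fin 2) Rp := fun p => Phi (famA (Sum.inl p))
def VR : ℕ × ℕ × ℕ × ℕ → Matrix (Fin 2) (Fin 2) Rp := fun p => Phi (famA (Sum.inr p))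

lemma VL_eq (p : ℕ × ℕ) : VL p = Mu ^ p.1 * Mv ^ p.2 := by
  simp [VL, famA, map_mul, map_pow, Phi_U, Phi_V]

lemma VR_eq (p : ℕ × ℕ × ℕ × ℕ) :
    VR p = Mu ^ p.1 * Mv ^ p.2.1 * (Mv * Mu - Mu * Mv) * Mu ^ p.2.2.1 * Mv ^ p.2.2.2 := by
  simp [VR, famA, map_mul, map_pow, map_sub, Phi_U, Phi_V]

lemma e00_VL (p : ℕ × ℕ) : entryLM 0 0 (VL p) = monomial (fs2 p) 1 := by
  obtain ⟨a, b⟩ := p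
  rw [VL_eq]
  exact ((L_entries a b).1).trans (mono2 a b)

lemma e00_VR (p : ℕ × ℕ × ℕ × ℕ) : entryLM 0 0 (VR p) = 0 := by
  obtain ⟨a, b, c, d⟩ := p
  rw [VR_eq]
  exact (inr_entries a b c d).1

lemma e01_VR (p : ℕ × ℕ × ℕ × ℕ) :
    entryLM 0 1 (VR p) = (X 2 - X 0) * monomial (fs4 p) 1 := by
  obtain ⟨a, b, c, d⟩ := p
  rw [VR_eq]
  exact (inr_entries a b c d).2.trans (by rw [mono4])

lemma hVL : LinearIndependent ℂ VL := by
  apply LinearIndependent.of_comp (entryLM 0 0)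
  have : (entryLM 0 0) ∘ VL = fun p : ℕ × ℕ => (monomial (fs2 p) 1 : Rp) := by
    funext p; exact e00_VL p
  rw [this]; exact ind2

lemma hVR : LinearIndependent ℂ VR := by
  apply LinearIndependent.of_comp (entryLM 0 1)
  have hm : LinearIndependent ℂ ((LinearMap.mulLeft ℂ (X 2 - X 0 : Rp)) ∘
      fun p : ℕ × ℕ × ℕ × ℕ => (monomial (fs4 p) 1 : Rp)) := by
    apply ind4.map'
    rw [LinearMap.ker_eq_bot]
    exact fun x y hxy => mul_left_cancel₀ hXX hxy
  have : (entryLM 0 1) ∘ VR = (LinearMap.mulLeft ℂ (X 2 - X 0 : Rp)) ∘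
      fun p : ℕ × ℕ × ℕ × ℕ => (monomial (fs4 p) 1 : Rp) := by
    funext p; exact (e01_VR p).trans rfl
  rw [this]; exact hm

lemma hdisj : Disjoint (Submodule.span ℂ (Set.range VL)) (Submodule.span ℂ (Set.range VR)) := by
  rw [Submodule.disjoint_def]
  intro x hxL hxR
  have h0 : entryLM 0 0 x = 0 := by
    have hmem : entryLM 0 0 x ∈ Submodule.map (entryLM 0 0) (Submodule.span ℂ (Set.range VR)) :=
      ⟨x, hxR, rfl⟩
    rw [Submodule.map_span] at hmem
    have hsub : (entryLM 0 0) '' Set.range VR ⊆ {0} := by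
      rintro _ ⟨_, ⟨p, rfl⟩, rfl⟩
      exact e00_VR p
    have := Submodule.span_mono (R := ℂ) hsub hmem
    simpa using this
  obtain ⟨c, hc⟩ := Finsupp.mem_span_range_iff_exists_finsupp.mp hxL
  have hcc : Finsupp.linearCombination ℂ (fun p => entryLM 0 0 (VL p)) c = 0 := by
    rw [Finsupp.linearCombination_apply]
    rw [← h0, ← hc, map_finsuppSum]
    simp [Finsupp.sum, map_smul]
  have hind : LinearIndependent ℂ (fun p => entryLM 0 0 (VL p)) := by
    have : (fun p => entryLM 0 0 (VL p)) = fun p : ℕ × ℕ => (monomial (fs2 p) 1 : Rp) := by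
      funext p; exact e00_VL p
    rw [this]; exact ind2
  have hc0 : c = 0 := linearIndependent_iff.mp hind c hcc
  rw [← hc, hc0]
  simp

lemma famA_indep : LinearIndependent ℂ famA := by
  apply LinearIndependent.of_comp Phi.toLinearMap
  have : ⇑Phi.toLinearMap ∘ famA = Sum.elim VL VR := by
    funext i; cases i <;> rfl
  rw [this]
  exact hVL.sum_type hVR hdisj

end Assembly

noncomputable section Span

open Finset

lemma inl_mul_u (a b : ℕ) :
    (Ugen ^ a * Vgen ^ b) * Ugen = Ugen ^ (a + 1) * Vgen ^ b
      + ∑ j ∈ Finset.range b,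
          Ugen ^ a * Vgen ^ j * (Vgen * Ugen - Ugen * Vgen) * Ugen ^ 0 * Vgen ^ (b - 1 - j) := by
  rw [mul_assoc, vpow_mul_u b, mul_add, Finset.mul_sum]
  congr 1
  · rw [← mul_assoc, ← pow_succ]
  · refine Finset.sum_congr rfl fun j hj => ?_
    rw [pow_zero, mul_one]
    unfold Tcomm
    noncomm_ring

lemma inr_mul_u (a b c d : ℕ) :
    (Ugen ^ a * Vgen ^ b * (Vgen * Ugen - Ugen * Vgen) * Ugen ^ c * Vgen ^ d) * Ugen
      = Ugen ^ a * Vgen ^ b * (Vgen * Ugen - Ugen * Vgen) * Ugen ^ (c + 1) * Vgen ^ d := by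
  rw [mul_assoc, vpow_mul_u d, mul_add, Finset.mul_sum]
  have hz : ∀ j ∈ Finset.range d,
      (Ugen ^ a * Vgen ^ b * (Vgen * Ugen - Ugen * Vgen) * Ugen ^ c)
        * (Vgen ^ j * Tcomm * Vgen ^ (d - 1 - j)) = 0 := by
    intro j hj
    have hts := t_sandwich (Ugen ^ a * Vgen ^ b) (Ugen ^ c * Vgen ^ j) (Vgen ^ (d - 1 - j))
    have key : (Ugen ^ a * Vgen ^ b * (Vgen * Ugen - Ugen * Vgen) * Ugen ^ c)
        * (Vgen ^ j * Tcomm * Vgen ^ (d - 1 - j))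
        = Ugen ^ a * Vgen ^ b * Tcomm * (Ugen ^ c * Vgen ^ j) * Tcomm * Vgen ^ (d - 1 - j) := by
      unfold Tcomm
      noncomm_ring
    rw [key, hts]
  rw [Finset.sum_congr rfl hz, Finset.sum_const_zero, add_zero, pow_succ]
  noncomm_ring

lemma famA_mul_u (i : (ℕ × ℕ) ⊕ (ℕ × ℕ × ℕ × ℕ)) :
    famA i * Ugen ∈ Submodule.span ℂ (Set.range famA) := by
  cases i with
  | inl p =>
      obtain ⟨a, b⟩ := p
      show (Ugen ^ a * Vgen ^ b) * Ugen ∈ _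
      rw [inl_mul_u]
      refine Submodule.add_mem _ (Submodule.subset_span ⟨Sum.inl (a + 1, b), rfl⟩) ?_
      exact Submodule.sum_mem _ fun j hj =>
        Submodule.subset_span ⟨Sum.inr (a, j, 0, b - 1 - j), rfl⟩
  | inr p =>
      obtain ⟨a, b, c, d⟩ := p
      show (Ugen ^ a * Vgen ^ b * (Vgen * Ugen - Ugen * Vgen) * Ugen ^ c * Vgen ^ d) * Ugen ∈ _
      rw [inr_mul_u]
      exact Submodule.subset_span ⟨Sum.inr (a, b, c + 1, d), rfl⟩

lemma famA_mul_v (i : (ℕ × ℕ) ⊕ (ℕ × ℕ × ℕ × ℕ)) :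
    famA i * Vgen ∈ Submodule.span ℂ (Set.range famA) := by
  cases i with
  | inl p =>
      obtain ⟨a, b⟩ := p
      show (Ugen ^ a * Vgen ^ b) * Vgen ∈ _
      rw [mul_assoc, ← pow_succ]
      exact Submodule.subset_span ⟨Sum.inl (a, b + 1), rfl⟩
  | inr p =>
      obtain ⟨a, b, c, d⟩ := p
      show (Ugen ^ a * Vgen ^ b * (Vgen * Ugen - Ugen * Vgen) * Ugen ^ c * Vgen ^ d) * Vgen ∈ _
      rw [mul_assoc, ← pow_succ]
      exact Submodule.subset_span ⟨Sum.inr (a, b, c, d + 1), rfl⟩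

lemma span_step_u :
    ∀ x ∈ Submodule.span ℂ (Set.range famA), x * Ugen ∈ Submodule.span ℂ (Set.range famA) := by
  intro x hx
  induction hx using Submodule.span_induction with
  | mem y hy => obtain ⟨i, rfl⟩ := hy; exact famA_mul_u i
  | zero => simp
  | add y z hy hz hy' hz' => rw [add_mul]; exact Submodule.add_mem _ hy' hz'
  | smul a y hy hy' => rw [smul_mul_assoc]; exact Submodule.smul_mem _ _ hy'

lemma span_step_v :
    ∀ x ∈ Submodule.span ℂ (Set.range famA), x * Vgen ∈ Submodule.span ℂ (Set.range famA) := by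
  intro x hx
  induction hx using Submodule.span_induction with
  | mem y hy => obtain ⟨i, rfl⟩ := hy; exact famA_mul_v i
  | zero => simp
  | add y z hy hz hy' hz' => rw [add_mul]; exact Submodule.add_mem _ hy' hz'
  | smul a y hy hy' => rw [smul_mul_assoc]; exact Submodule.smul_mem _ _ hy'

lemma famA_span : ⊤ ≤ Submodule.span ℂ (Set.range famA) := by
  set S := Submodule.span ℂ (Set.range famA) with hS
  have h1 : (1 : FreeMetabelian2) ∈ S := by
    have : famA (Sum.inl (0, 0)) = 1 := by simp [famA]
    rw [← this]
    exact Submodule.subset_span ⟨_, rfl⟩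
  let T : Subalgebra ℂ FreeMetabelian2 :=
    { carrier := {x | ∀ s ∈ S, s * x ∈ S}
      mul_mem' := fun {x y} hx hy s hs => by
        rw [← mul_assoc]; exact hy _ (hx _ hs)
      one_mem' := fun s hs => by simpa using hs
      add_mem' := fun {x y} hx hy s hs => by
        rw [mul_add]; exact Submodule.add_mem _ (hx s hs) (hy s hs)
      zero_mem' := fun s hs => by simpa using Submodule.zero_mem S
      algebraMap_mem' := fun r s hs => by
        have he : s * algebraMap ℂ FreeMetabelian2 r = r • s := by
          rw [← Algebra.commutes, ← Algebra.smul_def]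
        rw [he]
        exact Submodule.smul_mem _ _ hs }
  have hUT : Ugen ∈ T := fun s hs => span_step_u s hs
  have hVT : Vgen ∈ T := fun s hs => span_step_v s hs
  have hadj : Algebra.adjoin ℂ
      (Set.range fun i : Fin 2 =>
        RingQuot.mkAlgHom ℂ (MetabelianRel (Fin 2)) (FreeAlgebra.ι ℂ i)) = ⊤ := by
    have hr : (Set.range fun i : Fin 2 =>
        RingQuot.mkAlgHom ℂ (MetabelianRel (Fin 2)) (FreeAlgebra.ι ℂ i))
        = ⇑(RingQuot.mkAlgHom ℂ (MetabelianRel (Fin 2))) ''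
          (Set.range (FreeAlgebra.ι ℂ (X := Fin 2))) := by
      rw [← Set.range_comp]; rfl
    rw [hr, ← AlgHom.map_adjoin, FreeAlgebra.adjoin_range_ι, Algebra.map_top,
      AlgHom.range_eq_top]
    exact RingQuot.mkAlgHom_surjective ℂ (MetabelianRel (Fin 2))
  have hT : ∀ x : FreeMetabelian2, x ∈ T := by
    intro x
    have hx : x ∈ Algebra.adjoin ℂ
        (Set.range fun i : Fin 2 =>
          RingQuot.mkAlgHom ℂ (MetabelianRel (Fin 2)) (FreeAlgebra.ι ℂ i)) := by
      rw [hadj]; trivial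
    refine Algebra.adjoin_le ?_ hx
    rintro _ ⟨i, rfl⟩
    fin_cases i
    · exact hUT
    · exact hVT
  intro x _
  have := hT x 1 h1
  simpa using this

end Span

/-- The free metabelian associative algebra `A₂(𝔐)` on `u, v` has a `ℂ`-basis
consisting of `u^a v^b` and `u^a v^b [v,u] u^c v^d`, `a,b,c,d ≥ 0`. -/
theorem freeMetabelian_basis :
    ∃ B : Module.Basis ((ℕ × ℕ) ⊕ (ℕ × ℕ × ℕ × ℕ)) ℂ FreeMetabelian2,
      (∀ a b : ℕ, B (Sum.inl (a, b)) = Ugen ^ a * Vgen ^ b) ∧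
      (∀ a b c d : ℕ, B (Sum.inr (a, b, c, d)) =
        Ugen ^ a * Vgen ^ b * (Vgen * Ugen - Ugen * Vgen) * Ugen ^ c *
          Vgen ^ d) := by
  refine ⟨Module.Basis.mk famA_indep famA_span, ?_, ?_⟩
  · intro a b
    rw [Module.Basis.mk_apply]
    rfl
  · intro a b c d
    rw [Module.Basis.mk_apply]
    rfl
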